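/- Let J be the T_G-ideal (graded ideal closed under graded endomorphisms of the free graded algebra) generated by: (1) x_1 x_2 - x_2 x_1 with deg x_1 = deg x_2 = e; (2) x_1 x_3 x_2 - x_2 x_3 x_1 with e != deg x_1 = deg x_2 = (deg x_3)^{-1}; (3) all variables x of degree h with (M_n(K))_h = 0. If m and n are graded monomials in variables x_1,...,x_p such that the generic-matrix evaluations m(A_1,...,A_p) and n(A_1,...,A_p) share the same nonzero entry in the same position, then m is congruent to n modulo J. -/

import Mathlib

/-- The free `G`-graded associative algebra `K⟨X⟩` on the variables `x_{h,i}` (`h ∈ G`,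
`i ∈ ℕ`, the variable `x_{h,i}` having degree `h`), realized as the monoid algebra of the
free monoid on `G × ℕ`. -/
abbrev FreeGr (K : Type*) (G : Type*) [Field K] := MonoidAlgebra K (FreeMonoid (G × ℕ))

/-- The homogeneous component of degree `h` of `K⟨X⟩`: the span of the monomials whose
degrees multiply to `h`. -/
noncomputable def homComp (K : Type*) [Field K] {G : Type*} [Group G] (h : G) :
    Submodule K (FreeGr K G) :=
  Submodule.span K {x | ∃ w : FreeMonoid (G × ℕ),
    FreeMonoid.lift (fun p : G × ℕ => p.1) w = h ∧
    x = MonoidAlgebra.of K (FreeMonoid (G × ℕ)) w}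

/-- The two-sided ideal of `K⟨X⟩` generated by a set `S` (as a `K`-subspace spanned by the
products `u * s * v`). -/
noncomputable def idealSpan {K : Type*} [Field K] {G : Type*} [Group G] (S : Set (FreeGr K G)) :
    Submodule K (FreeGr K G) :=
  Submodule.span K {x | ∃ u s v : FreeGr K G, s ∈ S ∧ x = u * s * v}

/-- Homogeneous component of degree `h` of the elementary `G`-grading of `Mₙ(K)`
induced by `g : Fin n → G`. -/
def elemComp (K : Type*) [Field K] {G : Type*} [Group G] {n : ℕ} (g : Fin n → G) (h : G) :
    Submodule K (Matrix (Fin n) (Fin n) K) :=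
  Submodule.span K {M | ∃ i j : Fin n, (g i)⁻¹ * g j = h ∧ M = Matrix.single i j 1}

/-- All graded substitution instances of the identity `x₁x₂ - x₂x₁`, `deg x₁ = deg x₂ = ε`. -/
def genSet1 (K : Type*) [Field K] (G : Type*) [Group G] : Set (FreeGr K G) :=
  {x | ∃ a b : FreeGr K G, a ∈ homComp K (1 : G) ∧ b ∈ homComp K (1 : G) ∧
    x = a * b - b * a}

/-- All graded substitution instances of the identity `x₁x₃x₂ - x₂x₃x₁`, with
`ε ≠ deg x₁ = deg x₂ = (deg x₃)⁻¹`. -/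
def genSet2 (K : Type*) [Field K] (G : Type*) [Group G] : Set (FreeGr K G) :=
  {x | ∃ (h : G) (a b c : FreeGr K G), h ≠ 1 ∧ a ∈ homComp K h ∧ b ∈ homComp K h ∧
    c ∈ homComp K h⁻¹ ∧ x = a * c * b - b * c * a}

/-- All graded substitution instances of the identities `x = 0` for variables `x` of degree
`h` with `(Mₙ(K))_h = 0`: the homogeneous elements of such degrees `h`. -/
def genSet3 (K : Type*) [Field K] {G : Type*} [Group G] {n : ℕ} (g : Fin n → G) :
    Set (FreeGr K G) :=
  {x | ∃ h : G, elemComp K g h = ⊥ ∧ x ∈ homComp K h}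

/-- The generic matrix `A_i^{(h)}` over `Ω = K[Y]`. -/
noncomputable def genMat {K : Type*} [Field K] {G : Type*} [Group G] [DecidableEq G] {n : ℕ}
    (g : Fin n → G) (h : G) (i : ℕ) :
    Matrix (Fin n) (Fin n) (MvPolynomial (G × ℕ × Fin n) K) :=
  Matrix.of fun k l => if g k * h = g l then MvPolynomial.X (h, i, k) else 0

/-- Evaluation of a graded monomial (word) at the generic matrices. -/
noncomputable def evalWord (K : Type*) [Field K] {G : Type*} [Group G] [DecidableEq G] {n : ℕ}
    (g : Fin n → G) (w : FreeMonoid (G × ℕ)) :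
    Matrix (Fin n) (Fin n) (MvPolynomial (G × ℕ × Fin n) K) :=
  (w.toList.map fun p => genMat (K := K) g p.1 p.2).prod



set_option linter.unusedSectionVars false

section Stmt11Aux

variable {K : Type*} [Field K] {G : Type*} [Group G] [DecidableEq G] {n : ℕ}

/-- The unique next node (if any). -/
noncomputable def nxt (g : Fin n → G) (k : Fin n) (h : G) : Option (Fin n) :=
  if hh : ∃ j, g k * h = g j then some hh.choose else none

lemma nxt_spec {g : Fin n → G} {k j : Fin n} {h : G} (H : nxt g k h = some j) :
    g k * h = g j := by
  unfold nxt at H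
  split at H
  · rename_i hh
    obtain rfl : hh.choose = j := by simpa using H
    exact hh.choose_spec
  · simp at H

lemma nxt_eq_some {g : Fin n → G} (hg : Function.Injective g) {k j : Fin n} {h : G}
    (H : g k * h = g j) : nxt g k h = some j := by
  have hh : ∃ j, g k * h = g j := ⟨j, H⟩
  unfold nxt
  rw [dif_pos hh]
  exact congrArg some (hg (hh.choose_spec.symm.trans H))

/-- Trace of a word along the generic walk: final node and the multiset of
(variable) triples collected. -/
noncomputable def trace (g : Fin n → G) : Fin n → List (G × ℕ) →
    Option (Fin n × Multiset (G × ℕ × Fin n))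
  | k, [] => some (k, 0)
  | k, p :: w =>
    match nxt g k p.1 with
    | none => none
    | some j => (trace g j w).map fun q => (q.1, (p.1, p.2, k) ::ₘ q.2)

@[simp] lemma trace_nil (g : Fin n → G) (k : Fin n) : trace g k [] = some (k, 0) := rfl

lemma trace_cons_some {g : Fin n → G} {k l : Fin n} {p : G × ℕ} {w : List (G × ℕ)}
    {s : Multiset (G × ℕ × Fin n)} :
    trace g k (p :: w) = some (l, s) ↔
      ∃ j s', nxt g k p.1 = some j ∧ trace g j w = some (l, s') ∧
        s = (p.1, p.2, k) ::ₘ s' := by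
  constructor
  · intro H
    cases hn : nxt g k p.1 with
    | none => simp only [trace, hn] at H; cases H
    | some j =>
      simp only [trace, hn, Option.map_eq_some_iff] at H
      obtain ⟨⟨l', s'⟩, ht, heq⟩ := H
      simp only [Prod.mk.injEq] at heq
      exact ⟨j, s', rfl, by rw [ht, heq.1], heq.2.symm⟩
  · rintro ⟨j, s', hn, ht, rfl⟩
    simp only [trace, hn, ht, Option.map_some]

lemma trace_cons_of {g : Fin n → G} {k j l : Fin n} {p : G × ℕ} {w : List (G × ℕ)}
    {s' : Multiset (G × ℕ × Fin n)} (hn : nxt g k p.1 = some j)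
    (ht : trace g j w = some (l, s')) :
    trace g k (p :: w) = some (l, (p.1, p.2, k) ::ₘ s') :=
  trace_cons_some.2 ⟨j, s', hn, ht, rfl⟩

lemma trace_append (g : Fin n → G) (k : Fin n) (u v : List (G × ℕ)) :
    trace g k (u ++ v) = (trace g k u).bind fun q =>
      (trace g q.1 v).map fun q' => (q'.1, q.2 + q'.2) := by
  induction u generalizing k with
  | nil =>
    simp only [List.nil_append, trace_nil, Option.bind_some]
    cases trace g k v with
    | none => rfl
    | some q => simp
  | cons p u ih =>
    show trace g k (p :: (u ++ v)) = _
    cases hn : nxt g k p.1 with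
    | none => simp [trace, hn]
    | some j =>
      cases htu : trace g j u with
      | none => simp [trace, hn, ih j, htu]
      | some q =>
        cases htv : trace g q.1 v with
        | none => simp [trace, hn, ih j, htu, htv]
        | some q' => simp [trace, hn, ih j, htu, htv, Multiset.cons_add]

lemma trace_append_some {g : Fin n → G} {k l : Fin n} {u v : List (G × ℕ)}
    {s : Multiset (G × ℕ × Fin n)} (H : trace g k (u ++ v) = some (l, s)) :
    ∃ j su sv, trace g k u = some (j, su) ∧ trace g j v = some (l, sv) ∧ s = su + sv := by
  rw [trace_append] at H
  rw [Option.bind_eq_some_iff] at H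
  obtain ⟨q, hu, H2⟩ := H
  rw [Option.map_eq_some_iff] at H2
  obtain ⟨q', hv, heq⟩ := H2
  simp only [Prod.mk.injEq] at heq
  exact ⟨q.1, q.2, q'.2, hu, by rw [hv, ← heq.1], heq.2.symm⟩

lemma trace_append_of {g : Fin n → G} {k j l : Fin n} {u v : List (G × ℕ)}
    {su sv : Multiset (G × ℕ × Fin n)} (hu : trace g k u = some (j, su))
    (hv : trace g j v = some (l, sv)) :
    trace g k (u ++ v) = some (l, su + sv) := by
  rw [trace_append, hu, Option.bind_some, hv, Option.map_some]

/-- Degree of a word. -/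
def degL (w : List (G × ℕ)) : G := (w.map Prod.fst).prod

@[simp] lemma degL_nil : degL ([] : List (G × ℕ)) = 1 := rfl

lemma degL_cons (p : G × ℕ) (w : List (G × ℕ)) : degL (p :: w) = p.1 * degL w := by
  simp [degL]

lemma degL_append (u v : List (G × ℕ)) : degL (u ++ v) = degL u * degL v := by
  simp [degL]

lemma trace_deg {g : Fin n → G} : ∀ {w : List (G × ℕ)} {k l : Fin n}
    {s : Multiset (G × ℕ × Fin n)}, trace g k w = some (l, s) → g l = g k * degL w := by
  intro w
  induction w with
  | nil => intro k l s H; simp only [trace_nil, Option.some.injEq, Prod.mk.injEq] at H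
           rw [← H.1]; simp
  | cons p w ih =>
    intro k l s H
    obtain ⟨j, s', hn, ht, _⟩ := trace_cons_some.1 H
    rw [ih ht, ← nxt_spec hn, degL_cons, mul_assoc]

lemma trace_card {g : Fin n → G} : ∀ {w : List (G × ℕ)} {k l : Fin n}
    {s : Multiset (G × ℕ × Fin n)}, trace g k w = some (l, s) →
      Multiset.card s = w.length := by
  intro w
  induction w with
  | nil => intro k l s H; simp only [trace_nil, Option.some.injEq, Prod.mk.injEq] at H
           rw [← H.2]; simp
  | cons p w ih =>
    intro k l s H
    obtain ⟨j, s', hn, ht, rfl⟩ := trace_cons_some.1 H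
    simp [ih ht]

lemma trace_mem_split {g : Fin n → G} : ∀ {w : List (G × ℕ)} {k l : Fin n}
    {s : Multiset (G × ℕ × Fin n)}, trace g k w = some (l, s) →
    ∀ {t : G × ℕ × Fin n}, t ∈ s →
    ∃ u v su sv j', w = u ++ (t.1, t.2.1) :: v ∧ trace g k u = some (t.2.2, su) ∧
      nxt g t.2.2 t.1 = some j' ∧ trace g j' v = some (l, sv) ∧ s = su + (t ::ₘ sv) := by
  intro w
  induction w with
  | nil =>
    intro k l s H t ht
    simp only [trace_nil, Option.some.injEq, Prod.mk.injEq] at H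
    rw [← H.2] at ht; simp at ht
  | cons p w ih =>
    intro k l s H t ht
    obtain ⟨j, s', hn, hw, rfl⟩ := trace_cons_some.1 H
    rcases Multiset.mem_cons.1 ht with h1 | h1
    · subst h1
      exact ⟨[], w, 0, s', j, by simp, rfl, hn, hw, by simp⟩
    · obtain ⟨u, v, su, sv, j', hsplit, hu, hnx, hv, hs⟩ := ih hw h1
      refine ⟨p :: u, v, (p.1, p.2, k) ::ₘ su, sv, j', by rw [hsplit]; rfl,
        trace_cons_of hn hu, hnx, hv, ?_⟩
      rw [hs, Multiset.cons_add]

end Stmt11Aux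
-- part 2 (appended after part1's defs within same section in final file)
noncomputable def Of (K : Type*) [Field K] {G : Type*} [Group G] (w : List (G × ℕ)) :
    FreeGr K G :=
  MonoidAlgebra.of K (FreeMonoid (G × ℕ)) (FreeMonoid.ofList w)

lemma Of_append (K : Type*) [Field K] {G : Type*} [Group G] (u v : List (G × ℕ)) :
    Of K (u ++ v) = Of K u * Of K v := by
  unfold Of
  rw [show FreeMonoid.ofList (u ++ v) = FreeMonoid.ofList u * FreeMonoid.ofList v from rfl,
    map_mul]

lemma Of_mem_homComp (K : Type*) [Field K] {G : Type*} [Group G] (w : List (G × ℕ)) :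
    Of K w ∈ homComp K (degL w) :=
  Submodule.subset_span ⟨FreeMonoid.ofList w,
    by rw [FreeMonoid.lift_apply, FreeMonoid.toList_ofList]; rfl, rfl⟩

lemma mul_mem_idealSpan {K : Type*} [Field K] {G : Type*} [Group G]
    {S : Set (FreeGr K G)} {x : FreeGr K G} (hx : x ∈ idealSpan S) (a b : FreeGr K G) :
    a * x * b ∈ idealSpan S := by
  induction hx using Submodule.span_induction with
  | mem y hy =>
    obtain ⟨u, s, v, hs, rfl⟩ := hy
    exact Submodule.subset_span ⟨a * u, s, v * b, hs, by simp only [mul_assoc]⟩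
  | zero => simp only [mul_zero, zero_mul]; exact Submodule.zero_mem _
  | add y z _ _ hy hz =>
    rw [mul_add, add_mul]; exact Submodule.add_mem _ hy hz
  | smul c y _ hy =>
    rw [mul_smul_comm, smul_mul_assoc]; exact Submodule.smul_mem _ c hy

lemma mem_idealSpan_of_mem {K : Type*} [Field K] {G : Type*} [Group G]
    {S : Set (FreeGr K G)} {s : FreeGr K G} (hs : s ∈ S) : s ∈ idealSpan S :=
  Submodule.subset_span ⟨1, s, 1, hs, by rw [one_mul, mul_one]⟩

section Moves

variable {K : Type*} [Field K] {G : Type*} [Group G] [DecidableEq G] {n : ℕ} (g : Fin n → G)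

/-- The `T_G`-ideal as a `K`-submodule. -/
noncomputable abbrev Jid (K : Type*) [Field K] {G : Type*} [Group G] {n : ℕ}
    (g : Fin n → G) : Submodule K (FreeGr K G) :=
  idealSpan (genSet1 K G ∪ genSet2 K G ∪ genSet3 K g)

lemma move1 {x y : List (G × ℕ)} (hx : degL x = 1) (hy : degL y = 1) (v : List (G × ℕ)) :
    Of K (x ++ y ++ v) - Of K (y ++ x ++ v) ∈ Jid K g := by
  have hgen : Of K x * Of K y - Of K y * Of K x ∈ genSet1 K G :=
    ⟨Of K x, Of K y, hx ▸ Of_mem_homComp K x, hy ▸ Of_mem_homComp K y, rfl⟩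
  have hmem : Of K x * Of K y - Of K y * Of K x ∈ Jid K g :=
    mem_idealSpan_of_mem (Set.mem_union_left _ (Set.mem_union_left _ hgen))
  have key := mul_mem_idealSpan hmem 1 (Of K v)
  rw [one_mul, sub_mul] at key
  simpa only [Of_append, mul_assoc] using key

lemma move2 {h : G} (hne : h ≠ 1) {A B C : List (G × ℕ)} (hA : degL A = h)
    (hB : degL B = h) (hC : degL C = h⁻¹) (Y : List (G × ℕ)) :
    Of K (A ++ C ++ B ++ Y) - Of K (B ++ C ++ A ++ Y) ∈ Jid K g := by
  have hgen : Of K A * Of K C * Of K B - Of K B * Of K C * Of K A ∈ genSet2 K G :=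
    ⟨h, Of K A, Of K B, Of K C, hne, hA ▸ Of_mem_homComp K A, hB ▸ Of_mem_homComp K B,
      hC ▸ Of_mem_homComp K C, rfl⟩
  have hmem : Of K A * Of K C * Of K B - Of K B * Of K C * Of K A ∈ Jid K g :=
    mem_idealSpan_of_mem (Set.mem_union_left _ (Set.mem_union_right _ hgen))
  have key := mul_mem_idealSpan hmem 1 (Of K Y)
  rw [one_mul, sub_mul] at key
  simpa only [Of_append, mul_assoc] using key

lemma strip {x : List (G × ℕ)} {y z : List (G × ℕ)}
    (hyz : Of K y - Of K z ∈ Jid K g) : Of K (x ++ y) - Of K (x ++ z) ∈ Jid K g := by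
  have key := mul_mem_idealSpan hyz (Of K x) 1
  rw [mul_one, mul_sub] at key
  simpa only [Of_append] using key

end Moves
section Shift

variable {K : Type*} [Field K] {G : Type*} [Group G] [DecidableEq G] {n : ℕ} {g : Fin n → G}

lemma opair_inj {α β : Type*} {a c : α} {b d : β}
    (h : (some (a, b) : Option (α × β)) = some (c, d)) : a = c ∧ b = d := by
  simpa using h

lemma shift (K : Type*) [Field K] (hg : Function.Injective g) {a b : G × ℕ} (hab : a ≠ b)
    {m₁ n₁ : List (G × ℕ)} {k l₁ l₂ : Fin n} {s : Multiset (G × ℕ × Fin n)}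
    (hm : trace g k (a :: m₁) = some (l₁, s))
    (hn : trace g k (b :: n₁) = some (l₂, s)) :
    ∃ w, trace g k (a :: w) = some (l₂, s) ∧ Of K (b :: n₁) - Of K (a :: w) ∈ Jid K g := by
  have hta : (a.1, a.2, k) ∈ s := by
    obtain ⟨k0, sm0, h0, h1, hsm0⟩ := trace_cons_some.1 hm
    exact hsm0 ▸ Multiset.mem_cons_self _ _
  obtain ⟨u, v, su, sv, k', hsplit0, hu, hnx, hv0, hss⟩ := trace_mem_split hn hta
  have hsplit : b :: n₁ = u ++ a :: v := hsplit0
  have hu' : trace g k u = some (k, su) := hu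
  have hnak : nxt g k a.1 = some k' := hnx
  obtain ⟨k0, sm₁, hnak0, hm₁0, hsm⟩ := trace_cons_some.1 hm
  have hk0 : k0 = k' := by
    have := hnak0.symm.trans hnak
    simpa using this
  rw [hk0] at hm₁0
  have hm₁ : trace g k' m₁ = some (l₁, sm₁) := hm₁0
  have hv : trace g k' v = some (l₂, sv) := hv0
  have hss' : s = su + ((a.1, a.2, k) ::ₘ sv) := hss
  have hune : u ≠ [] := by
    intro h0
    rw [h0, List.nil_append] at hsplit
    exact hab (List.cons.inj hsplit.symm).1
  have hdegu : degL u = 1 := by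
    have h1 := trace_deg hu'
    exact (left_eq_mul.1 h1)
  by_cases ha1 : a.1 = 1
  · -- Case A: the letter `a` has degree 1; a single relation-(1) move suffices.
    have hk'k : k' = k := hg (by rw [← nxt_spec hnak, ha1, mul_one])
    rw [hk'k] at hv hnak
    refine ⟨u ++ v, ?_, ?_⟩
    · have h2 : trace g k (u ++ v) = some (l₂, su + sv) := trace_append_of hu' hv
      have h3 := trace_cons_of hnak h2
      rw [h3, hss']
      congr 2
      simp only [← Multiset.singleton_add]
      abel
    · have key := move1 (K := K) g hdegu (by simp [degL, ha1] : degL [a] = 1) v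
      have e1 : u ++ [a] ++ v = b :: n₁ := by
        rw [hsplit, List.append_assoc]; rfl
      have e2 : [a] ++ u ++ v = a :: (u ++ v) := by
        rw [List.append_assoc]; rfl
      rw [e1, e2] at key
      exact key
  · by_cases hret : ∃ v₁ v₂ t₁, v = v₁ ++ v₂ ∧ trace g k' v₁ = some (k, t₁)
    · -- Case B(ii): the walk returns to `k` after the occurrence of `a`.
      obtain ⟨v₁, v₂, t₁, hv12, hrv₁⟩ := hret
      subst hv12
      obtain ⟨j₂, sv₁, sv₂, hrv₁', hrv₂, hsv⟩ := trace_append_some hv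
      have hj₂ : j₂ = k := (opair_inj (hrv₁'.symm.trans hrv₁)).1
      rw [hj₂] at hrv₁' hrv₂
      have hy : trace g k (a :: v₁) = some (k, (a.1, a.2, k) ::ₘ sv₁) :=
        trace_cons_of hnak hrv₁'
      have hdegy : degL (a :: v₁) = 1 := left_eq_mul.1 (trace_deg hy)
      refine ⟨v₁ ++ (u ++ v₂), ?_, ?_⟩
      · have h2 : trace g k (u ++ v₂) = some (l₂, su + sv₂) := trace_append_of hu' hrv₂
        have h3 : trace g k ((a :: v₁) ++ (u ++ v₂)) =
            some (l₂, ((a.1, a.2, k) ::ₘ sv₁) + (su + sv₂)) := trace_append_of hy h2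
        have h4 : (a :: v₁) ++ (u ++ v₂) = a :: (v₁ ++ (u ++ v₂)) := rfl
        rw [h4] at h3
        rw [h3, hss', hsv]
        congr 2
        simp only [← Multiset.singleton_add]
        abel
      · have key := move1 (K := K) g hdegu hdegy v₂
        have e1 : u ++ (a :: v₁) ++ v₂ = b :: n₁ := by
          rw [hsplit, List.append_assoc]; rfl
        have e2 : (a :: v₁) ++ u ++ v₂ = a :: (v₁ ++ (u ++ v₂)) := by
          rw [List.append_assoc]; rfl
        rw [e1, e2] at key
        exact key
    · -- Case B(iii): no return to `k`; use the comparison word and relation (2).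
      -- The letter `b` occurs in `a :: m₁` at node `k`.
      have htb : (b.1, b.2, k) ∈ s := by
        obtain ⟨kb, sn₁, hnbk, hn₁, hsn⟩ := trace_cons_some.1 hn
        exact hsn ▸ Multiset.mem_cons_self _ _
      obtain ⟨p, q, sp, sq, jp, hsplitp0, hp, hnxp, hq, hsp⟩ := trace_mem_split hm htb
      have hsplitp : a :: m₁ = p ++ b :: q := hsplitp0
      have hp' : trace g k p = some (k, sp) := hp
      -- p is nonempty and starts with a
      obtain ⟨r, rfl⟩ : ∃ r, p = a :: r := by
        cases p with
        | nil =>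
          exfalso
          rw [List.nil_append] at hsplitp
          exact hab (List.cons.inj hsplitp).1
        | cons p₀ r =>
          refine ⟨r, ?_⟩
          have h₀ := (List.cons.inj hsplitp).1
          rw [h₀]
      obtain ⟨k'', sr, hnak'', hr0, hspr⟩ := trace_cons_some.1 hp'
      have hk'' : k'' = k' := by
        have := hnak''.symm.trans hnak
        simpa using this
      rw [hk''] at hr0
      have hr : trace g k' r = some (k, sr) := hr0
      -- every element of sr belongs to s
      have hsr_mem : ∀ e ∈ sr, e ∈ s := by
        intro e he
        rw [hsm]
        have hm₁' : m₁ = r ++ b :: q := by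
          have h₀ := hsplitp
          rw [List.cons_append] at h₀
          exact (List.cons.inj h₀).2
        rw [hm₁'] at hm₁
        obtain ⟨j₃, t₃, t₄, hr', _, hsm₁⟩ := trace_append_some hm₁
        obtain ⟨_, ht₃⟩ := opair_inj (hr'.symm.trans hr)
        subst ht₃
        rw [hsm₁]
        exact Multiset.mem_cons_of_mem (Multiset.mem_add.2 (Or.inl he))
      -- the two "sides"
      set InU : Fin n → Prop := fun q₀ => ∃ u₁ u₂ t₁, u = u₁ ++ u₂ ∧ u₁ ≠ [] ∧ u₂ ≠ [] ∧
        trace g k u₁ = some (q₀, t₁) with hInU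
      set InAV : Fin n → Prop := fun q₀ => ∃ v₁ v₂ t₁, v = v₁ ++ v₂ ∧
        trace g k' v₁ = some (q₀, t₁) with hInAV
      have hAVne : ∀ q₀, InAV q₀ → q₀ ≠ k := by
        rintro q₀ ⟨v₁, v₂, t₁, hv12, htr⟩ rfl
        exact hret ⟨v₁, v₂, t₁, hv12, htr⟩
      have hCLS : ∀ e ∈ s, e.2.2 ≠ k → InU e.2.2 ∨ e ∈ sv := by
        intro e he hek
        rw [hss'] at he
        rcases Multiset.mem_add.1 he with h1 | h1
        · left
          obtain ⟨u₁, u₂', t₁, t₂, j₃, hu12, hu₁, _, _, _⟩ := trace_mem_split hu' h1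
          refine ⟨u₁, (e.1, e.2.1) :: u₂', t₁, hu12, ?_, by simp, hu₁⟩
          intro h0
          rw [h0, trace_nil] at hu₁
          exact hek ((opair_inj hu₁).1).symm
        · rcases Multiset.mem_cons.1 h1 with h2 | h2
          · exact absurd (show e.2.2 = k by rw [h2]) hek
          · exact Or.inr h2
      have hAVmem : ∀ e ∈ sv, ∀ j₀, nxt g e.2.2 e.1 = some j₀ → InAV e.2.2 ∧ InAV j₀ := by
        intro e he j₀ hnx₀
        obtain ⟨v₁, v₂, t₁, t₂, j₃, hv12, hv₁, hnx₃, _, _⟩ := trace_mem_split hv he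
        constructor
        · exact ⟨v₁, (e.1, e.2.1) :: v₂, t₁, hv12, hv₁⟩
        · have hj₃ : j₃ = j₀ := by
            have := hnx₃.symm.trans hnx₀
            simpa using this
          subst hj₃
          refine ⟨v₁ ++ [(e.1, e.2.1)], v₂, t₁ + ((e.1, e.2.1, e.2.2) ::ₘ 0), ?_, ?_⟩
          · rw [hv12, List.append_assoc]; rfl
          · exact trace_append_of hv₁ (trace_cons_of hnx₃ (trace_nil g _))
      -- main walk induction
      have hq : ∃ q₀, InU q₀ ∧ InAV q₀ := by
        by_contra Hcon
        have WLK : ∀ (r₂ r₁ : List (G × ℕ)) (j : Fin n) t₁ t₂, r = r₁ ++ r₂ →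
            trace g k' r₁ = some (j, t₁) → trace g j r₂ = some (k, t₂) → InAV j → False := by
          intro r₂
          induction r₂ with
          | nil =>
            intro r₁ j t₁ t₂ hre htr₁ htr₂ hAV
            rw [trace_nil] at htr₂
            exact hAVne j hAV (opair_inj htr₂).1
          | cons x r₂' ih =>
            intro r₁ j t₁ t₂ hre htr₁ htr₂ hAV
            obtain ⟨j₀, t₂', hnxj, hr₂', rfl⟩ := trace_cons_some.1 htr₂
            have he_mem : (x.1, x.2, j) ∈ s := by
              apply hsr_mem
              rw [hre] at hr
              obtain ⟨j₄, t₄, t₅, htr₁', htr₂'', hsr'⟩ := trace_append_some hr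
              obtain ⟨hj₄, ht₄⟩ := opair_inj (htr₁'.symm.trans htr₁)
              subst hj₄; subst ht₄
              obtain ⟨ht₅1, ht₅2⟩ := opair_inj (htr₂''.symm.trans htr₂)
              rw [hsr', ht₅2]
              exact Multiset.mem_add.2 (Or.inr (Multiset.mem_cons_self _ _))
            have hjk : j ≠ k := hAVne j hAV
            rcases hCLS _ he_mem hjk with h1 | h1
            · exact Hcon ⟨j, h1, hAV⟩
            · have hAV' := (hAVmem _ h1 j₀ hnxj).2
              refine ih (r₁ ++ [x]) j₀ (t₁ + ((x.1, x.2, j) ::ₘ 0)) t₂'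
                (by rw [hre, List.append_assoc]; rfl)
                (trace_append_of htr₁ (trace_cons_of hnxj (trace_nil g _))) hr₂' hAV'
        exact WLK r [] k' 0 sr rfl (trace_nil g k') hr ⟨[], v, 0, rfl, trace_nil g k'⟩
      obtain ⟨q₀, hqU, hqAV⟩ := hq
      obtain ⟨u₁, u₂, t₁, hu12, hu₁ne, hu₂ne, htu₁⟩ := hqU
      obtain ⟨v₁, v₂, t₂, hv12, htv₁⟩ := hqAV
      have hq₀k : q₀ ≠ k := hAVne q₀ ⟨v₁, v₂, t₂, hv12, htv₁⟩
      -- traces of the remaining pieces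
      have htu₂ : ∃ su₂, trace g q₀ u₂ = some (k, su₂) ∧ su = t₁ + su₂ := by
        rw [hu12] at hu'
        obtain ⟨j₅, w₁, w₂, h₁, h₂, h₃⟩ := trace_append_some hu'
        obtain ⟨hj₅, hw₁⟩ := opair_inj (h₁.symm.trans htu₁)
        subst hj₅; subst hw₁
        exact ⟨w₂, h₂, h₃⟩
      obtain ⟨su₂, htu₂', hsu⟩ := htu₂
      have htv₂ : ∃ sv₂, trace g q₀ v₂ = some (l₂, sv₂) ∧ sv = t₂ + sv₂ := by
        rw [hv12] at hv
        obtain ⟨j₆, w₁, w₂, h₁, h₂, h₃⟩ := trace_append_some hv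
        obtain ⟨hj₆, hw₁⟩ := opair_inj (h₁.symm.trans htv₁)
        subst hj₆; subst hw₁
        exact ⟨w₂, h₂, h₃⟩
      obtain ⟨sv₂, htv₂', hsv⟩ := htv₂
      -- degrees
      have hdA : g q₀ = g k * degL u₁ := trace_deg htu₁
      have hB : trace g k (a :: v₁) = some (q₀, (a.1, a.2, k) ::ₘ t₂) :=
        trace_cons_of hnak htv₁
      have hdB : g q₀ = g k * degL (a :: v₁) := trace_deg hB
      have hBA : degL (a :: v₁) = degL u₁ := mul_left_cancel (hdB.symm.trans hdA)
      have hdC : degL u₂ = (degL u₁)⁻¹ := by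
        have h₁ : g k = g q₀ * degL u₂ := trace_deg htu₂'
        rw [hdA, mul_assoc] at h₁
        have h₂ : degL u₁ * degL u₂ = 1 := (left_eq_mul.1 h₁)
        exact (inv_eq_of_mul_eq_one_right h₂).symm
      have hA_ne : degL u₁ ≠ 1 := by
        intro h0
        rw [h0, mul_one] at hdA
        exact hq₀k (hg hdA.symm).symm
      refine ⟨v₁ ++ (u₂ ++ (u₁ ++ v₂)), ?_, ?_⟩
      · have h2 : trace g k' (v₁ ++ (u₂ ++ (u₁ ++ v₂))) =
            some (l₂, t₂ + (su₂ + (t₁ + sv₂))) :=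
          trace_append_of htv₁ (trace_append_of htu₂' (trace_append_of htu₁ htv₂'))
        have h3 := trace_cons_of hnak h2
        rw [h3, hss', hsu, hsv]
        congr 2
        simp only [← Multiset.singleton_add]
        abel
      · have key := move2 (K := K) g hA_ne (rfl : degL u₁ = degL u₁) hBA hdC v₂
        have e1 : u₁ ++ u₂ ++ (a :: v₁) ++ v₂ = b :: n₁ := by
          rw [hsplit, hu12, hv12]
          simp only [List.append_assoc, List.cons_append, List.nil_append]
        have e2 : (a :: v₁) ++ u₂ ++ u₁ ++ v₂ = a :: (v₁ ++ (u₂ ++ (u₁ ++ v₂))) := by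
          simp only [List.append_assoc, List.cons_append]
        rw [e1, e2] at key
        exact key

end Shift
section Main

variable {K : Type*} [Field K] {G : Type*} [Group G] [DecidableEq G] {n : ℕ} {g : Fin n → G}

lemma main_induction (K : Type*) [Field K] (hg : Function.Injective g) :
    ∀ (N : ℕ) (m nn : List (G × ℕ)) (k l₁ l₂ : Fin n) (s : Multiset (G × ℕ × Fin n)),
      m.length ≤ N → trace g k m = some (l₁, s) → trace g k nn = some (l₂, s) →
      Of K m - Of K nn ∈ Jid K g := by
  intro N
  induction N with
  | zero =>
    intro m nn k l₁ l₂ s hlen hm hn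
    have hm0 : m = [] := List.length_eq_zero_iff.1 (Nat.le_zero.1 hlen)
    subst hm0
    rw [trace_nil] at hm
    have hs : s = 0 := ((opair_inj hm).2).symm
    subst hs
    have hn0 : nn = [] := List.length_eq_zero_iff.1 (by rw [← trace_card hn]; simp)
    subst hn0
    rw [sub_self]
    exact Submodule.zero_mem _
  | succ N ih =>
    intro m nn k l₁ l₂ s hlen hm hn
    cases m with
    | nil =>
      rw [trace_nil] at hm
      have hs : s = 0 := ((opair_inj hm).2).symm
      subst hs
      have hn0 : nn = [] := List.length_eq_zero_iff.1 (by rw [← trace_card hn]; simp)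
      subst hn0
      rw [sub_self]
      exact Submodule.zero_mem _
    | cons a m' =>
      obtain ⟨k₂, s₁, hna, hm', hs₁⟩ := trace_cons_some.1 hm
      have hlen' : m'.length ≤ N := by
        rw [List.length_cons] at hlen
        omega
      cases nn with
      | nil =>
        exfalso
        rw [trace_nil] at hn
        have h0 := (opair_inj hn).2
        rw [hs₁] at h0
        exact Multiset.cons_ne_zero h0.symm
      | cons b n' =>
        by_cases hab : a = b
        · subst hab
          obtain ⟨k₂', s₂, hna', hn', hs₂⟩ := trace_cons_some.1 hn
          have hk₂ : k₂' = k₂ := by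
            have := hna'.symm.trans hna
            simpa using this
          rw [hk₂] at hn'
          have hs12 : s₂ = s₁ := by
            have : (a.1, a.2, k) ::ₘ s₁ = (a.1, a.2, k) ::ₘ s₂ := by rw [← hs₁, ← hs₂]
            exact ((Multiset.cons_inj_right _).1 this).symm
          rw [hs12] at hn'
          have hrec := ih m' n' k₂ l₁ l₂ s₁ hlen' hm' hn'
          exact strip g (x := [a]) hrec
        · obtain ⟨w, hw, hJ1⟩ := shift K hg hab hm hn
          obtain ⟨k₂', s₃, hna'', hw', hs₃⟩ := trace_cons_some.1 hw
          have hk₂ : k₂' = k₂ := by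
            have := hna''.symm.trans hna
            simpa using this
          rw [hk₂] at hw'
          have hs31 : s₃ = s₁ := by
            have : (a.1, a.2, k) ::ₘ s₁ = (a.1, a.2, k) ::ₘ s₃ := by rw [← hs₁, ← hs₃]
            exact ((Multiset.cons_inj_right _).1 this).symm
          rw [hs31] at hw'
          have hrec := ih m' w k₂ l₁ l₂ s₁ hlen' hm' hw'
          have h2 : Of K (a :: m') - Of K (a :: w) ∈ Jid K g := strip g (x := [a]) hrec
          have h3 := Submodule.sub_mem _ h2 hJ1
          rw [sub_sub_sub_cancel_right] at h3
          exact h3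

end Main

section Eval

variable {K : Type*} [Field K] {G : Type*} [Group G] [DecidableEq G] {n : ℕ} {g : Fin n → G}

/-- The monomial associated to a multiset of variables. -/
noncomputable def monOf (K : Type*) [Field K] {G : Type*} {n : ℕ}
    (s : Multiset (G × ℕ × Fin n)) : MvPolynomial (G × ℕ × Fin n) K :=
  (s.map MvPolynomial.X).prod

lemma monOf_cons (K : Type*) [Field K] {G : Type*} {n : ℕ} (t : G × ℕ × Fin n)
    (s : Multiset (G × ℕ × Fin n)) :
    monOf K (t ::ₘ s) = MvPolynomial.X t * monOf K s := by
  simp [monOf]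

lemma toFinsupp_cons {α : Type*} [DecidableEq α] (a : α) (s : Multiset α) :
    Multiset.toFinsupp (a ::ₘ s) = Multiset.toFinsupp s + Finsupp.single a 1 := by
  ext b
  simp only [Multiset.toFinsupp_apply, Multiset.count_cons, Finsupp.add_apply,
    Finsupp.single_apply]
  by_cases hba : b = a
  · subst hba
    simp
  · rw [if_neg hba, if_neg fun h => hba h.symm]

lemma monOf_eq_monomial (K : Type*) [Field K] {G : Type*} [DecidableEq G] {n : ℕ}
    (s : Multiset (G × ℕ × Fin n)) :
    monOf K s = MvPolynomial.monomial (Multiset.toFinsupp s) 1 := by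
  induction s using Multiset.induction_on with
  | empty => simp [monOf]
  | cons a s ihs =>
    rw [monOf_cons, ihs, toFinsupp_cons,
      show (MvPolynomial.X a : MvPolynomial (G × ℕ × Fin n) K) =
        MvPolynomial.monomial (Finsupp.single a 1) 1 from rfl,
      MvPolynomial.monomial_mul, one_mul, add_comm]

lemma monOf_inj (K : Type*) [Field K] {G : Type*} [DecidableEq G] {n : ℕ}
    {s t : Multiset (G × ℕ × Fin n)} (h : monOf K s = monOf K t) : s = t := by
  rw [monOf_eq_monomial, monOf_eq_monomial] at h
  exact Multiset.toFinsupp.injective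
    (MvPolynomial.monomial_left_injective (R := K) one_ne_zero h)

lemma monOf_ne_zero (K : Type*) [Field K] {G : Type*} [DecidableEq G] {n : ℕ}
    (s : Multiset (G × ℕ × Fin n)) : monOf K s ≠ 0 := by
  rw [monOf_eq_monomial]
  intro h
  have := congrArg (MvPolynomial.coeff (Multiset.toFinsupp s)) h
  simp [MvPolynomial.coeff_monomial] at this

lemma eval_entry (K : Type*) [Field K] (hg : Function.Injective g) :
    ∀ (w : List (G × ℕ)) (k l : Fin n),
      (List.prod (w.map fun p => genMat (K := K) g p.1 p.2)) k l =
        (trace g k w).elim 0 (fun q => if q.1 = l then monOf K q.2 else 0) := by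
  intro w
  induction w with
  | nil =>
    intro k l
    simp only [List.map_nil, List.prod_nil, trace_nil, Option.elim_some]
    rw [Matrix.one_apply]
    by_cases hkl : k = l <;> simp [hkl, monOf]
  | cons p w ih =>
    intro k l
    rw [List.map_cons, List.prod_cons, Matrix.mul_apply]
    by_cases hex : ∃ j₀, g k * p.1 = g j₀
    · obtain ⟨j₀, hj₀⟩ := hex
      have hnxt : nxt g k p.1 = some j₀ := nxt_eq_some hg hj₀
      have hterm : ∀ j : Fin n, genMat (K := K) g p.1 p.2 k j *
          (List.prod (w.map fun p => genMat (K := K) g p.1 p.2)) j l =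
          if j = j₀ then MvPolynomial.X (p.1, p.2, k) *
            (List.prod (w.map fun p => genMat (K := K) g p.1 p.2)) j l else 0 := by
        intro j
        by_cases hj : j = j₀
        · subst hj
          simp [genMat, hj₀]
        · have hng : ¬(g k * p.1 = g j) := fun h0 => hj (hg (h0.symm.trans hj₀))
          simp only [genMat, Matrix.of_apply, if_neg hng, if_neg hj, zero_mul]
      rw [Finset.sum_congr rfl fun j _ => hterm j, Finset.sum_ite_eq' Finset.univ j₀,
        if_pos (Finset.mem_univ j₀)]
      rw [show trace g k (p :: w) = (trace g j₀ w).map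
        (fun q => (q.1, (p.1, p.2, k) ::ₘ q.2)) by rw [trace, hnxt]]
      rw [ih j₀]
      cases ht : trace g j₀ w with
      | none => simp
      | some q =>
        simp only [Option.elim_some, Option.map_some]
        by_cases hql : q.1 = l
        · rw [if_pos hql, if_pos hql, monOf_cons]
        · rw [if_neg hql, if_neg hql, mul_zero]
    · have hnone : nxt g k p.1 = none := by
        unfold nxt
        rw [dif_neg hex]
      have hz : ∀ j : Fin n, genMat (K := K) g p.1 p.2 k j *
          (List.prod (w.map fun p => genMat (K := K) g p.1 p.2)) j l = 0 := by
        intro j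
        have hng : ¬(g k * p.1 = g j) := fun h0 => hex ⟨j, h0⟩
        simp only [genMat, Matrix.of_apply, if_neg hng, zero_mul]
      rw [Finset.sum_congr rfl fun j _ => hz j, Finset.sum_const_zero]
      rw [show trace g k (p :: w) = none by rw [trace, hnone]]
      rfl

end Eval

/-- if two graded monomials have generic-matrix evaluations with the same
nonzero entry in the same position, then they are congruent modulo the `T_G`-ideal `J`
generated by the identities (1), (2), (3). -/
theorem monomials_congruent_mod_J
    (K : Type*) [Field K] [Infinite K] {G : Type*} [Group G] [DecidableEq G] {n : ℕ}
    (g : Fin n → G) (hg : Function.Injective g)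
    (m nn : FreeMonoid (G × ℕ))
    (hexists : ∃ k l : Fin n,
      evalWord K g m k l = evalWord K g nn k l ∧ evalWord K g (n := n) m k l ≠ 0) :
    MonoidAlgebra.of K (FreeMonoid (G × ℕ)) m - MonoidAlgebra.of K (FreeMonoid (G × ℕ)) nn ∈
      idealSpan (genSet1 K G ∪ genSet2 K G ∪ genSet3 K g) := by
  classical
  obtain ⟨k, l, heq, hne⟩ := hexists
  have h1 : evalWord K g m k l = (trace g k m.toList).elim 0
      (fun q => if q.1 = l then monOf K q.2 else 0) := eval_entry K hg m.toList k l
  have h2 : evalWord K g nn k l = (trace g k nn.toList).elim 0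
      (fun q => if q.1 = l then monOf K q.2 else 0) := eval_entry K hg nn.toList k l
  rw [h1] at hne
  rw [h1, h2] at heq
  cases htm : trace g k m.toList with
  | none => rw [htm] at hne; simp at hne
  | some qm =>
    rw [htm] at hne heq
    have hql : qm.1 = l := by
      by_contra h0
      rw [Option.elim_some, if_neg h0] at hne
      exact hne rfl
    rw [Option.elim_some, if_pos hql] at hne heq
    cases htn : trace g k nn.toList with
    | none =>
      rw [htn] at heq
      exact absurd heq hne
    | some qn =>
      rw [htn, Option.elim_some] at heq
      have hqnl : qn.1 = l := by
        by_contra h0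
        rw [if_neg h0] at heq
        exact hne heq
      rw [if_pos hqnl] at heq
      have hseq : qm.2 = qn.2 := monOf_inj K heq
      have htm' : trace g k m.toList = some (qm.1, qm.2) := htm
      have htn' : trace g k nn.toList = some (qn.1, qm.2) := by
        rw [htn, hseq]
      have hmain := main_induction K hg m.toList.length m.toList nn.toList k qm.1 qn.1 qm.2
        le_rfl htm' htn'
      have hOfm : Of K (FreeMonoid.toList m) = MonoidAlgebra.of K (FreeMonoid (G × ℕ)) m := by
        rw [Of, FreeMonoid.ofList_toList]
      have hOfn : Of K (FreeMonoid.toList nn) = MonoidAlgebra.of K (FreeMonoid (G × ℕ)) nn := by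
        rw [Of, FreeMonoid.ofList_toList]
      rw [← hOfm, ← hOfn]
      exact hmain
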